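/- Every element of SU(1,2) fixes a point of the closed unit ball of ℙ²(ℂ). Concretely: for every matrix A ∈ M₃(ℂ) with Aᴴ * J * A = J and det A = 1, there exist a nonzero vector v : Fin 3 → ℂ and a scalar λ ∈ ℂ such that A.mulVec v = λ • v and Re(B(v,v)) ≤ 0. -/

import Mathlib

open Matrix

/-- Every element of SU(1,2) fixes a point of the closed unit ball of ℙ²(ℂ):
it has an eigenvector `v ≠ 0` with `Re(B(v,v)) ≤ 0`. -/
theorem su12_fixed_point_in_closed_ball
    (A : Matrix (Fin 3) (Fin 3) ℂ)
    (hA : Aᴴ * Matrix.diagonal ![-1, 1, 1] * A = Matrix.diagonal ![-1, 1, 1])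
    (hdet : A.det = 1) :
    ∃ (v : Fin 3 → ℂ) (l : ℂ), v ≠ 0 ∧ A.mulVec v = l • v ∧
      (star v ⬝ᵥ (Matrix.diagonal ![-1, 1, 1]).mulVec v).re ≤ 0 := by
  classical
  set J : Matrix (Fin 3) (Fin 3) ℂ := Matrix.diagonal ![-1, 1, 1] with hJ
  set B : (Fin 3 → ℂ) → (Fin 3 → ℂ) → ℂ := fun v w => star v ⬝ᵥ J.mulVec w with hB
  by_contra hcon
  push_neg at hcon
  have hpos : ∀ (v : Fin 3 → ℂ) (l : ℂ), v ≠ 0 → A.mulVec v = l • v → 0 < (B v v).re :=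
    fun v l hv hl => hcon v l hv hl
  have hinv : ∀ v w, B (A.mulVec v) (A.mulVec w) = B v w := by
    intro v w
    simp only [hB, Matrix.star_mulVec, Matrix.dotProduct_mulVec, Matrix.vecMul_vecMul,
      ← Matrix.mul_assoc, hA]
  have hsmulr : ∀ (a : ℂ) (v w : Fin 3 → ℂ), B v (a • w) = a * B v w := by
    intro a v w
    simp only [hB]
    rw [Matrix.mulVec_smul, dotProduct_smul, smul_eq_mul]
  have hsmull : ∀ (a : ℂ) (v w : Fin 3 → ℂ), B (a • v) w = (starRingEnd ℂ) a * B v w := by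
    intro a v w
    simp only [hB]
    rw [star_smul, smul_dotProduct, smul_eq_mul, starRingEnd_apply]
  have haddr : ∀ (v w₁ w₂ : Fin 3 → ℂ), B v (w₁ + w₂) = B v w₁ + B v w₂ := by
    intro v w₁ w₂
    simp only [hB]
    rw [Matrix.mulVec_add, dotProduct_add]
  have haddl : ∀ (v₁ v₂ w : Fin 3 → ℂ), B (v₁ + v₂) w = B v₁ w + B v₂ w := by
    intro v₁ v₂ w
    simp only [hB]
    rw [star_add, add_dotProduct]
  have hzerol : ∀ w, B 0 w = 0 := by
    intro w; simp only [hB]; rw [star_zero, zero_dotProduct]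
  have hzeror : ∀ v, B v 0 = 0 := by
    intro v; simp only [hB]; rw [Matrix.mulVec_zero, dotProduct_zero]
  set f : Module.End ℂ (Fin 3 → ℂ) := A.mulVecLin with hf
  have hfapply : ∀ v, f v = A.mulVec v := by
    intro v; simp [hf, Matrix.mulVecLin_apply]
  have hBne : ∀ (μ : ℂ) (v : Fin 3 → ℂ), v ∈ f.eigenspace μ → v ≠ 0 → B v v ≠ 0 := by
    intro μ v hv hv0
    have h1 : A.mulVec v = μ • v := by
      rw [← hfapply]; exact Module.End.mem_eigenspace_iff.mp hv
    have h2 := hpos v μ hv0 h1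
    intro h; rw [h] at h2; simp at h2
  have heigvec : ∀ (μ : ℂ) (v : Fin 3 → ℂ), v ∈ f.eigenspace μ → A.mulVec v = μ • v := by
    intro μ v hv
    rw [← hfapply]; exact Module.End.mem_eigenspace_iff.mp hv
  have hunit : ∀ (μ : ℂ) (v : Fin 3 → ℂ), v ∈ f.eigenspace μ → v ≠ 0 →
      (starRingEnd ℂ) μ * μ = 1 := by
    intro μ v hv hv0
    have h2 : B (A.mulVec v) (A.mulVec v) = B v v := hinv v v
    rw [heigvec μ v hv, hsmulr, hsmull] at h2
    have h3 : ((starRingEnd ℂ) μ * μ - 1) * B v v = 0 := by linear_combination h2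
    rcases mul_eq_zero.mp h3 with h | h
    · linear_combination h
    · exact absurd h (hBne μ v hv hv0)
  -- no generalized eigenvectors beyond eigenvectors
  have hnogen : ∀ (μ : ℂ) (k : ℕ) (x : Fin 3 → ℂ),
      ((f - μ • (1 : Module.End ℂ (Fin 3 → ℂ))) ^ k) x = 0 →
      (f - μ • (1 : Module.End ℂ (Fin 3 → ℂ))) x = 0 := by
    intro μ k
    set g : Module.End ℂ (Fin 3 → ℂ) := f - μ • (1 : Module.End ℂ (Fin 3 → ℂ)) with hg
    have hgapply : ∀ x, g x = A.mulVec x - μ • x := by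
      intro x
      rw [hg, LinearMap.sub_apply, LinearMap.smul_apply, Module.End.one_apply, hfapply]
    induction k with
    | zero =>
      intro x hx
      have : x = 0 := by simpa using hx
      rw [this, map_zero]
    | succ k ih =>
      intro x hx
      set y : Fin 3 → ℂ := g x with hy
      have hky : (g ^ k) y = 0 := by
        rw [hy, ← Module.End.mul_apply, ← pow_succ]
        exact hx
      have h1 : g y = 0 := ih y hky
      by_cases hy0 : y = 0
      · exact hy0
      · exfalso
        have hyeig : y ∈ f.eigenspace μ := by
          have h4 : A.mulVec y - μ • y = 0 := by rw [← hgapply, h1]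
          rw [Module.End.mem_eigenspace_iff, hfapply, ← sub_eq_zero]
          exact h4
        have hyv : A.mulVec y = μ • y := heigvec μ y hyeig
        have hxv : A.mulVec x = μ • x + y := by
          have h5 : A.mulVec x - μ • x = y := by rw [hy, hgapply]
          rw [sub_eq_iff_eq_add'] at h5
          exact h5
        have hu : (starRingEnd ℂ) μ * μ = 1 := hunit μ y hyeig hy0
        have h2 : B (A.mulVec y) (A.mulVec x) = B y x := hinv y x
        rw [hyv, hxv] at h2
        simp only [haddr, hsmull, hsmulr] at h2
        have h3 : (starRingEnd ℂ) μ * B y y = 0 := by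
          linear_combination h2 - ((B y x) * hu)
        have hμ : (starRingEnd ℂ) μ ≠ 0 := by
          intro h; rw [h, zero_mul] at hu; exact zero_ne_one hu
        exact hBne μ y hyeig hy0 ((mul_eq_zero.mp h3).resolve_left hμ)
  have hmaxle : ∀ μ : ℂ, f.maxGenEigenspace μ ≤ f.eigenspace μ := by
    intro μ x hx
    rw [Module.End.mem_maxGenEigenspace] at hx
    obtain ⟨k, hk⟩ := hx
    have h6 := hnogen μ k x hk
    rw [Module.End.mem_eigenspace_iff]
    rw [LinearMap.sub_apply, LinearMap.smul_apply, Module.End.one_apply, sub_eq_zero] at h6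
    exact h6
  have htop : (⨆ μ : ℂ, f.eigenspace μ) = ⊤ := by
    refine le_antisymm le_top ?_
    rw [← Module.End.iSup_maxGenEigenspace_eq_top f]
    exact iSup_mono hmaxle
  -- orthogonality of distinct eigenspaces
  have hortho : ∀ (μ ν : ℂ) (v w : Fin 3 → ℂ), μ ≠ ν → v ∈ f.eigenspace μ →
      w ∈ f.eigenspace ν → B v w = 0 := by
    intro μ ν v w hμν hv hw
    by_cases hv0 : v = 0
    · rw [hv0]; exact hzerol w
    by_cases hw0 : w = 0
    · rw [hw0]; exact hzeror v
    have huμ := hunit μ v hv hv0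
    have h2 : B (A.mulVec v) (A.mulVec w) = B v w := hinv v w
    rw [heigvec μ v hv, heigvec ν w hw, hsmulr, hsmull] at h2
    by_contra hBvw
    have h3 : (starRingEnd ℂ) μ * ν = 1 :=
      mul_right_cancel₀ hBvw
        (by linear_combination h2 : ((starRingEnd ℂ) μ * ν) * B v w = 1 * B v w)
    have hμ : (starRingEnd ℂ) μ ≠ 0 := by
      intro h; rw [h, zero_mul] at huμ; exact zero_ne_one huμ
    exact hμν (mul_left_cancel₀ hμ (h3.trans huμ.symm)).symm
  have hnonneg : ∀ (μ : ℂ) (v : Fin 3 → ℂ), v ∈ f.eigenspace μ → 0 ≤ (B v v).re := by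
    intro μ v hv
    by_cases hv0 : v = 0
    · rw [hv0, hzerol]; simp
    · exact le_of_lt (hpos v μ hv0 (heigvec μ v hv))
  -- sum lemmas
  have hsuml : ∀ (s : Finset ℂ) (g : ℂ → Fin 3 → ℂ) (w : Fin 3 → ℂ),
      B (∑ i ∈ s, g i) w = ∑ i ∈ s, B (g i) w := by
    intro s g w
    induction s using Finset.induction_on with
    | empty => simpa using hzerol w
    | insert _ _ h ih => rw [Finset.sum_insert h, Finset.sum_insert h, haddl, ih]
  have hsumr : ∀ (s : Finset ℂ) (g : ℂ → Fin 3 → ℂ) (v : Fin 3 → ℂ),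
      B v (∑ i ∈ s, g i) = ∑ i ∈ s, B v (g i) := by
    intro s g v
    induction s using Finset.induction_on with
    | empty => simpa using hzeror v
    | insert _ _ h ih => rw [Finset.sum_insert h, Finset.sum_insert h, haddr, ih]
  -- decompose e₀
  set e0 : Fin 3 → ℂ := Pi.single 0 1 with he0
  have he0mem : e0 ∈ ⨆ μ : ℂ, f.eigenspace μ := htop ▸ Submodule.mem_top
  rw [Submodule.mem_iSup_iff_exists_finsupp] at he0mem
  obtain ⟨c, hc, hcsum⟩ := he0mem
  have hsum : ∑ μ ∈ c.support, c μ = e0 := by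
    rw [← hcsum]; rfl
  have hBe0 : B e0 e0 = ∑ μ ∈ c.support, B (c μ) (c μ) := by
    rw [← hsum, hsuml]
    refine Finset.sum_congr rfl fun μ hμ => ?_
    rw [hsumr, Finset.sum_eq_single μ]
    · intro ν hν hνμ
      exact hortho μ ν (c μ) (c ν) (Ne.symm hνμ) (hc μ) (hc ν)
    · intro hμ'
      exact absurd hμ hμ'
  have hge : 0 ≤ (B e0 e0).re := by
    rw [hBe0, Complex.re_sum]
    exact Finset.sum_nonneg fun μ _ => hnonneg μ (c μ) (hc μ)
  have hlt : (B e0 e0).re = -1 := by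
    simp only [hB, hJ, he0]
    simp [dotProduct, Matrix.mulVec, Fin.sum_univ_three, Matrix.diagonal,
      Pi.single_apply]
  rw [hlt] at hge
  linarith
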